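/- Let C be a q-ary (n,k,r,ρ) LRC code with distance d, N = r+ρ-1, and μ = ⌈(n-(d-1))/N⌉ + 1. Then k ≤ μ·(N - log_q(∑_{e=0}^{⌊(ρ-1)/2⌋} C(N,e)(q-1)^e)). -/

import Mathlib

open Finset

def Wvol (x t m : ℕ) : ℕ := ∑ e ∈ range (t+1), m.choose e * x^e

lemma Wvol_pos (x t m : ℕ) : 1 ≤ Wvol x t m := by
  have : m.choose 0 * x^0 = 1 := by simp
  calc 1 = m.choose 0 * x ^ 0 := this.symm
  _ ≤ _ := Finset.single_le_sum (f := fun e => m.choose e * x^e) (by intros; positivity)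
      (by simp)

lemma choose_id (m e : ℕ) : (m+1 - e) * (m+1).choose e = (m+1) * m.choose e := by
  have h1 := Nat.add_one_mul_choose_eq m e
  have h2 := Nat.choose_succ_right_eq (m+1) e
  rw [h1, h2, mul_comm]

lemma choose_cross (m t e : ℕ) (he : e ≤ t) :
    m.choose t * (m+1).choose e ≤ (m+1).choose t * m.choose e := by
  apply Nat.le_of_mul_le_mul_left (c := m+1) (b := (m+1).choose t * m.choose e) ?_ (Nat.succ_pos m)
  have h1 : (m+1) * (m.choose t * (m+1).choose e) = ((m+1-t) * (m+1).choose t) * (m+1).choose e := by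
    rw [choose_id]; ring
  have h2 : (m+1) * ((m+1).choose t * m.choose e) = ((m+1-e) * (m+1).choose e) * (m+1).choose t := by
    rw [choose_id]; ring
  rw [h1, h2]
  have h3 : m+1-t ≤ m+1-e := Nat.sub_le_sub_left he (m+1)
  calc (m+1-t) * (m+1).choose t * (m+1).choose e
      ≤ (m+1-e) * (m+1).choose t * (m+1).choose e :=
        Nat.mul_le_mul_right _ (Nat.mul_le_mul_right _ h3)
  _ = (m+1-e) * (m+1).choose e * (m+1).choose t := by ring

lemma Wvol_rec (x t m : ℕ) :
    Wvol x t (m+1) + m.choose t * x^(t+1) = (x+1) * Wvol x t m := by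
  unfold Wvol
  induction t with
  | zero => simp; ring
  | succ t ih =>
    rw [Finset.sum_range_succ (n := t+1), Finset.sum_range_succ (n := t+1),
      Nat.choose_succ_succ, mul_add (x+1), ← ih]
    ring

lemma Wvol_cross (x t m : ℕ) :
    (m.choose t * x^(t+1)) * Wvol x t (m+1) ≤ ((m+1).choose t * x^(t+1)) * Wvol x t m := by
  unfold Wvol
  rw [Finset.mul_sum, Finset.mul_sum]
  apply Finset.sum_le_sum
  intro e he
  have := choose_cross m t e (by simpa [Nat.lt_succ_iff] using he)
  calc m.choose t * x ^ (t+1) * ((m+1).choose e * x ^ e)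
      = (m.choose t * (m+1).choose e) * (x^(t+1) * x^e) := by ring
  _ ≤ ((m+1).choose t * m.choose e) * (x^(t+1) * x^e) := Nat.mul_le_mul_right _ this
  _ = (m+1).choose t * x ^ (t+1) * (m.choose e * x ^ e) := by ring

lemma Wvol_logconcave (x t m : ℕ) :
    Wvol x t (m+2) * Wvol x t m ≤ Wvol x t (m+1) ^ 2 := by
  have hA := Wvol_rec x t m
  have hB := Wvol_rec x t (m+1)
  have key := Wvol_cross x t m
  -- W(m+2)*W m + c_{m+1} W m = (x+1) W(m+1) W m = W(m+1)*(W(m+1)+c_m)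
  have h1 : Wvol x t (m+2) * Wvol x t m + ((m+1).choose t * x^(t+1)) * Wvol x t m
      = Wvol x t (m+1) ^ 2 + (m.choose t * x^(t+1)) * Wvol x t (m+1) := by
    have : (Wvol x t (m+2) + (m+1).choose t * x^(t+1)) * Wvol x t m
        = Wvol x t (m+1) * (Wvol x t (m+1) + m.choose t * x^(t+1)) := by
      rw [hB, hA]; ring
    nlinarith [this]
  omega

lemma Wvol_ratio (x t m : ℕ) : Wvol x t (m+1) ^ m ≤ Wvol x t m ^ (m+1) := by
  induction m with
  | zero => simpa using Wvol_pos x t 0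
  | succ m ih =>
    have lc := Wvol_logconcave x t m
    have h1 : Wvol x t (m+2) ^ (m+1) * Wvol x t (m+1) ^ m
        ≤ Wvol x t (m+2) ^ (m+1) * Wvol x t m ^ (m+1) := Nat.mul_le_mul_left _ ih
    have h2 : Wvol x t (m+2) ^ (m+1) * Wvol x t m ^ (m+1)
        ≤ (Wvol x t (m+1) ^ 2) ^ (m+1) := by
      rw [← mul_pow]
      exact Nat.pow_le_pow_left lc _
    have h3 : (Wvol x t (m+1) ^ 2) ^ (m+1) = Wvol x t (m+1) ^ (m+2) * Wvol x t (m+1) ^ m := by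
      rw [← pow_mul, ← pow_add]; congr 1; ring
    have hpos : 0 < Wvol x t (m+1) ^ m := Nat.pow_pos (Wvol_pos x t (m+1))
    have := h1.trans (h2.trans_eq h3)
    exact Nat.le_of_mul_le_mul_right this hpos

lemma Wvol_crux (x t a m : ℕ) (h : a ≤ m) : Wvol x t m ^ a ≤ Wvol x t a ^ m := by
  induction m with
  | zero => interval_cases a; simp
  | succ m ih =>
    rcases Nat.eq_or_lt_of_le h with rfl | hlt
    · rfl
    · have ha : a ≤ m := Nat.lt_succ_iff.mp hlt
      have ihm := ih ha
      rcases Nat.eq_zero_or_pos m with rfl | hm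
      · interval_cases a; simpa using Wvol_pos x t 0
      have q1 : Wvol x t (m+1) ^ m ≤ Wvol x t m ^ (m+1) := Wvol_ratio x t m
      have : (Wvol x t (m+1) ^ a) ^ m ≤ (Wvol x t a ^ (m+1)) ^ m := by
        calc (Wvol x t (m+1) ^ a) ^ m = (Wvol x t (m+1) ^ m) ^ a := by rw [← pow_mul, ← pow_mul, Nat.mul_comm]
        _ ≤ (Wvol x t m ^ (m+1)) ^ a := Nat.pow_le_pow_left q1 a
        _ = (Wvol x t m ^ a) ^ (m+1) := by rw [← pow_mul, ← pow_mul, Nat.mul_comm]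
        _ ≤ (Wvol x t a ^ m) ^ (m+1) := Nat.pow_le_pow_left ihm (m+1)
        _ = (Wvol x t a ^ (m+1)) ^ m := by rw [← pow_mul, ← pow_mul, Nat.mul_comm]
      exact (Nat.pow_le_pow_iff_left hm.ne').mp this

lemma Wvol_le (x t m : ℕ) : Wvol x t m ≤ (x+1)^m := by
  unfold Wvol
  calc ∑ e ∈ range (t+1), m.choose e * x^e
      ≤ ∑ e ∈ range (m+t+1), m.choose e * x^e :=
        Finset.sum_le_sum_of_subset (by apply Finset.range_subset_range.mpr; omega)
  _ = ∑ e ∈ range (m+1), m.choose e * x^e := by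
        apply (Finset.sum_subset (by apply Finset.range_subset_range.mpr; omega) _).symm
        intro e _ he
        have : m < e := by simp [Finset.mem_range] at he ⊢; omega
        simp [Nat.choose_eq_zero_of_lt this]
  _ = (x+1)^m := by rw [add_pow]; simp [mul_comm]


-- ball cardinality (lower bound form is enough, but we aim for exact)
lemma ball_card {α Q : Type*} [Fintype α] [DecidableEq α] [Fintype Q] [DecidableEq Q]
    (p : α → Q) (t : ℕ) :
    Wvol (Fintype.card Q - 1) t (Fintype.card α)
      ≤ (univ.filter fun w : α → Q => (univ.filter fun j => w j ≠ p j).card ≤ t).card := by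
  classical
  set B := (univ.filter fun w : α → Q => (univ.filter fun j => w j ≠ p j).card ≤ t) with hB
  have hmap : ∀ w ∈ B, (univ.filter fun j => w j ≠ p j) ∈
      ((univ : Finset α).powerset.filter fun E => E.card ≤ t) := by
    intro w hw
    simp only [hB, mem_filter, mem_univ, true_and] at hw
    simp [hw]
  rw [Finset.card_eq_sum_card_fiberwise hmap]
  -- fiber over E has card (q-1)^|E|
  have hfiber : ∀ E ∈ ((univ : Finset α).powerset.filter fun E => E.card ≤ t),
      (B.filter fun w => (univ.filter fun j => w j ≠ p j) = E).card
        = (Fintype.card Q - 1) ^ E.card := by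
    intro E hE
    simp only [mem_filter, mem_powerset] at hE
    have : (B.filter fun w => (univ.filter fun j => w j ≠ p j) = E)
        = Fintype.piFinset (fun j => if j ∈ E then (univ.erase (p j)) else {p j}) := by
      ext w
      simp only [Fintype.mem_piFinset, mem_filter, hB, mem_univ, true_and]
      constructor
      · rintro ⟨hw, hEq⟩ j
        by_cases hj : j ∈ E
        · simp only [hj, if_true, Finset.mem_erase, mem_univ, and_true]
          have := hEq ▸ hj
          simpa using (Finset.mem_filter.mp this).2
        · simp only [hj, if_false, Finset.mem_singleton]
          by_contra hne
          exact hj (hEq ▸ (Finset.mem_filter.mpr ⟨Finset.mem_univ j, hne⟩))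
      · intro h
        have hEq : (univ.filter fun j => w j ≠ p j) = E := by
          ext j
          simp only [mem_filter, mem_univ, true_and]
          constructor
          · intro hne
            by_contra hj
            have := h j; simp [hj] at this; exact hne this
          · intro hj
            have := h j; simp [hj] at this
            exact this
        refine ⟨?_, hEq⟩
        rw [hEq]; exact hE.2
    rw [this, Fintype.card_piFinset]
    calc ∏ j, (if j ∈ E then (univ.erase (p j)) else {p j}).card
        = ∏ j, (if j ∈ E then Fintype.card Q - 1 else 1) := by
          apply Finset.prod_congr rfl
          intro j _
          by_cases hj : j ∈ E <;>
            simp [hj, Finset.card_erase_of_mem, Finset.card_univ]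
    _ = ∏ j ∈ (univ ∩ E), (Fintype.card Q - 1) := by
          rw [← Finset.prod_ite_mem]
    _ = (Fintype.card Q - 1) ^ E.card := by
          rw [Finset.univ_inter, Finset.prod_const]
  rw [Finset.sum_congr rfl hfiber]
  -- now sum over subsets with card ≤ t equals Wvol
  have hsplit : ∑ E ∈ ((univ : Finset α).powerset.filter fun E => E.card ≤ t),
      (Fintype.card Q - 1) ^ E.card
      = ∑ e ∈ range (t+1), ∑ E ∈ (univ : Finset α).powersetCard e, (Fintype.card Q - 1) ^ E.card := by
    rw [eq_comm]
    have hpc : ∀ e ∈ range (t+1), ((univ : Finset α).powersetCard e)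
        = (((univ : Finset α).powerset.filter fun E => E.card ≤ t).filter
            fun E => E.card = e) := by
      intro e he
      simp only [mem_range] at he
      rw [Finset.powersetCard_eq_filter, Finset.filter_filter]
      apply Finset.filter_congr
      intro E _
      constructor
      · intro h; exact ⟨by omega, h⟩
      · exact fun h => h.2
    rw [Finset.sum_congr rfl (fun e he => by rw [hpc e he])]
    exact Finset.sum_fiberwise_of_maps_to
      (fun E hE => by simp only [mem_filter] at hE; simp [mem_range]; omega) _
  rw [hsplit]
  unfold Wvol
  apply le_of_eq
  apply Finset.sum_congr rfl
  intro e _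
  rw [Finset.sum_congr rfl (fun E hE => by
        rw [(Finset.mem_powersetCard.mp hE).2]), Finset.sum_const,
      Finset.card_powersetCard, Finset.card_univ, smul_eq_mul, mul_comm]

lemma pack {α Q : Type*} [Fintype α] [DecidableEq α] [Fintype Q] [DecidableEq Q]
    (P : Finset (α → Q)) (ρ t : ℕ) (ht : 2*t + 1 ≤ ρ)
    (hP : ∀ p ∈ P, ∀ p' ∈ P, p ≠ p' → ρ ≤ (univ.filter fun j => p j ≠ p' j).card) :
    P.card * Wvol (Fintype.card Q - 1) t (Fintype.card α)
      ≤ (Fintype.card Q) ^ (Fintype.card α) := by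
  classical
  set ball : (α → Q) → Finset (α → Q) :=
    fun p => (univ.filter fun w : α → Q => (univ.filter fun j => w j ≠ p j).card ≤ t) with hball
  have hdisj : ∀ p ∈ P, ∀ p' ∈ P, p ≠ p' → Disjoint (ball p) (ball p') := by
    intro p hp p' hp' hne
    rw [Finset.disjoint_left]
    intro w hw hw'
    simp only [hball, mem_filter, mem_univ, true_and] at hw hw'
    have hsub : (univ.filter fun j => p j ≠ p' j)
        ⊆ (univ.filter fun j => w j ≠ p j) ∪ (univ.filter fun j => w j ≠ p' j) := by
      intro j hj
      simp only [mem_filter, mem_union, mem_univ, true_and] at hj ⊢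
      by_contra hc
      push_neg at hc
      exact hj (hc.1 ▸ hc.2 ▸ rfl)
    have := (Finset.card_le_card hsub).trans (Finset.card_union_le _ _)
    have hd := hP p hp p' hp' hne
    omega
  have hsum : ∑ p ∈ P, (ball p).card = (P.biUnion ball).card :=
    (Finset.card_biUnion hdisj).symm
  calc P.card * Wvol (Fintype.card Q - 1) t (Fintype.card α)
      = ∑ _p ∈ P, Wvol (Fintype.card Q - 1) t (Fintype.card α) := by
        rw [Finset.sum_const, smul_eq_mul]
  _ ≤ ∑ p ∈ P, (ball p).card := Finset.sum_le_sum (fun p _ => ball_card p t)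
  _ = (P.biUnion ball).card := hsum
  _ ≤ (univ : Finset (α → Q)).card := Finset.card_le_card (Finset.subset_univ _)
  _ = (Fintype.card Q) ^ (Fintype.card α) := by rw [Finset.card_univ, Fintype.card_fun]

lemma small_fiber {Q : Type*} [Fintype Q] [DecidableEq Q] {n d : ℕ}
    (C : Finset (Fin n → Q))
    (hdist : ∀ c ∈ C, ∀ c' ∈ C, c ≠ c' → d ≤ (univ.filter fun i => c i ≠ c' i).card)
    (U : Finset (Fin n)) (f : Fin n → Q) (hU : Uᶜ.card ≤ d - 1) (hd1 : 1 ≤ d) :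
    (C.filter fun c => ∀ j ∈ U, c j = f j).card ≤ 1 := by
  rw [Finset.card_le_one]
  intro c hc c' hc'
  simp only [mem_filter] at hc hc'
  by_contra hne
  have hd := hdist c hc.1 c' hc'.1 hne
  have hsub : (univ.filter fun i => c i ≠ c' i) ⊆ Uᶜ := by
    intro j hj
    simp only [mem_filter, mem_univ, true_and] at hj
    rw [Finset.mem_compl]
    intro hjU
    exact hj ((hc.2 j hjU).trans (hc'.2 j hjU).symm)
  have := (Finset.card_le_card hsub).trans hU
  omega

lemma main_count {Q : Type*} [Fintype Q] [DecidableEq Q]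
    (q n d ρ N t : ℕ) (hq : Fintype.card Q = q) (hq1 : 1 ≤ q)
    (ht : 2*t + 1 ≤ ρ) (hd1 : 1 ≤ d) (hN1 : 1 ≤ N)
    (C : Finset (Fin n → Q))
    (hdist : ∀ c ∈ C, ∀ c' ∈ C, c ≠ c' → d ≤ (univ.filter fun i => c i ≠ c' i).card)
    (R : Fin n → Finset (Fin n))
    (hmem : ∀ i, i ∈ R i) (hcard : ∀ i, (R i).card ≤ N)
    (hloc : ∀ i, ∀ c ∈ C, ∀ c' ∈ C, (∃ j ∈ R i, c j ≠ c' j) →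
      ρ ≤ ((R i).filter fun j => c j ≠ c' j).card) :
    ∀ u : ℕ, ∀ U : Finset (Fin n), ∀ f : Fin n → Q, Uᶜ.card = u →
      ((C.filter fun c => ∀ j ∈ U, c j = f j).card) ^ N *
        (Wvol (q-1) t N) ^ (u - (d-1) + N) ≤ (q ^ N) ^ (u - (d-1) + N) := by
  have hWq : Wvol (q-1) t N ≤ q ^ N := by
    have := Wvol_le (q-1) t N
    rwa [Nat.sub_add_cancel hq1] at this
  intro u
  induction u using Nat.strong_induction_on with
  | _ u IH =>
    intro U f hU
    set W := Wvol (q-1) t N with hW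
    set D := C.filter fun c => ∀ j ∈ U, c j = f j with hD
    by_cases hsmall : u ≤ d - 1
    · -- base case : at most one codeword
      have h1 : D.card ≤ 1 := small_fiber C hdist U f (hU ▸ hsmall) hd1
      have : u - (d-1) = 0 := by omega
      rw [this]
      calc D.card ^ N * W ^ (0 + N) ≤ 1 ^ N * W ^ (0 + N) :=
            Nat.mul_le_mul_right _ (Nat.pow_le_pow_left h1 N)
      _ = W ^ (0 + N) := by rw [one_pow, one_mul]
      _ ≤ (q ^ N) ^ (0 + N) := Nat.pow_le_pow_left hWq _
    · have hud : d ≤ u := by omega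
      -- pick an uncovered coordinate
      have hUc : Uᶜ.Nonempty := by
        rw [← Finset.card_pos, hU]; omega
      obtain ⟨i, hi⟩ := hUc
      have hiU : i ∉ U := Finset.mem_compl.mp hi
      set A := (R i) \ U with hA
      set a := A.card with ha
      have hiA : i ∈ A := Finset.mem_sdiff.mpr ⟨hmem i, hiU⟩
      have ha1 : 1 ≤ a := Finset.card_pos.mpr ⟨i, hiA⟩
      have haN : a ≤ N := le_trans (Finset.card_le_card Finset.sdiff_subset) (hcard i)
      have hAU : A ⊆ Uᶜ := fun j hj => Finset.mem_compl.mpr (Finset.mem_sdiff.mp hj).2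
      have hau : a ≤ u := hU ▸ Finset.card_le_card hAU
      have hu0 : 0 < u := by omega
      have harith1 : u - (d-1) + N = a + (u - (d-1) + N - a) := by omega
      have harith2 : ¬ (u - a ≤ d - 1) → u - (d-1) + N = a + ((u - a) - (d-1) + N) := by
        intro h; omega
      set U' := U ∪ A with hU'
      have hU'c : U'ᶜ.card = u - a := by
        have hcompl : (U ∪ A)ᶜ = Uᶜ \ A := by
          ext j
          simp only [Finset.mem_compl, Finset.mem_sdiff, Finset.mem_union]
          tauto
        rw [hU', hcompl, Finset.card_sdiff_of_subset hAU, hU]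
      set φ : (Fin n → Q) → (↥A → Q) := fun c => fun j => c ↑j with hφ
      set I := D.image φ with hI
      -- packing bound on the image
      have hpack : I.card * Wvol (q-1) t a ≤ q ^ a := by
        have hdistI : ∀ p ∈ I, ∀ p' ∈ I, p ≠ p' →
            ρ ≤ (univ.filter fun j : ↥A => p j ≠ p' j).card := by
          intro p hp p' hp' hne
          obtain ⟨c, hc, rfl⟩ := Finset.mem_image.mp hp
          obtain ⟨c', hc', rfl⟩ := Finset.mem_image.mp hp'
          obtain ⟨j0, hj0⟩ := Function.ne_iff.mp hne
          simp only [hD, mem_filter] at hc hc'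
          have hexists : ∃ j ∈ R i, c j ≠ c' j :=
            ⟨↑j0, (Finset.mem_sdiff.mp j0.2).1, hj0⟩
          have hd := hloc i c hc.1 c' hc'.1 hexists
          have hsub : (R i).filter (fun j => c j ≠ c' j) ⊆ A.filter (fun j => c j ≠ c' j) := by
            intro j hj
            simp only [mem_filter] at hj ⊢
            refine ⟨Finset.mem_sdiff.mpr ⟨hj.1, fun hjU => ?_⟩, hj.2⟩
            exact hj.2 ((hc.2 j hjU).trans (hc'.2 j hjU).symm)
          have hcardeq : (univ.filter fun j : ↥A => φ c j ≠ φ c' j).card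
              = (A.filter fun j => c j ≠ c' j).card := by
            refine Finset.card_bij (fun (j : ↥A) (_ : j ∈ univ.filter fun j : ↥A => φ c j ≠ φ c' j) =>
              (j : Fin n)) ?_ ?_ ?_
            · intro j hj
              simp only [mem_filter, mem_univ, true_and, hφ] at hj
              exact Finset.mem_filter.mpr ⟨j.2, hj⟩
            · intro j hj j' hj' hEq
              exact Subtype.ext hEq
            · intro j hj
              refine ⟨⟨j, (Finset.mem_filter.mp hj).1⟩, ?_, rfl⟩
              simp only [mem_filter, mem_univ, true_and, hφ]
              exact (Finset.mem_filter.mp hj).2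
          exact le_trans hd ((Finset.card_le_card hsub).trans (le_of_eq hcardeq.symm))
        have := pack (α := ↥A) I ρ t ht hdistI
        rwa [Fintype.card_coe, ← ha, hq] at this
      have key1 : I.card ^ N * W ^ a ≤ (q ^ N) ^ a := by
        calc I.card ^ N * W ^ a ≤ I.card ^ N * (Wvol (q-1) t a) ^ N :=
              Nat.mul_le_mul_left _ (Wvol_crux (q-1) t a N haN)
        _ = (I.card * Wvol (q-1) t a) ^ N := (mul_pow _ _ _).symm
        _ ≤ (q ^ a) ^ N := Nat.pow_le_pow_left hpack N
        _ = (q ^ N) ^ a := by rw [← pow_mul, ← pow_mul, mul_comm]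
      rcases D.eq_empty_or_nonempty with hDe | hDne
      · rw [hDe]
        simp only [Finset.card_empty]
        rw [Nat.zero_pow (by omega), Nat.zero_mul]
        exact Nat.zero_le _
      -- choose a fiber of maximal size
      obtain ⟨g, hg, hgmax⟩ := Finset.exists_max_image I
        (fun g => (D.filter fun c => φ c = g).card) (hDne.image φ)
      have hcount : D.card ≤ I.card * (D.filter fun c => φ c = g).card := by
        rw [Finset.card_eq_sum_card_fiberwise (f := φ) (t := I)
          (fun c hc => Finset.mem_image_of_mem φ hc)]
        calc ∑ g' ∈ I, (D.filter fun c => φ c = g').card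
            ≤ ∑ g' ∈ I, (D.filter fun c => φ c = g).card :=
              Finset.sum_le_sum hgmax
        _ = I.card * (D.filter fun c => φ c = g).card := by
              rw [Finset.sum_const, smul_eq_mul]
      -- the fiber embeds into the smaller problem
      set f' : Fin n → Q := fun j => if h : j ∈ A then g ⟨j, h⟩ else f j with hf'
      have hfib : (D.filter fun c => φ c = g) ⊆ C.filter fun c => ∀ j ∈ U', c j = f' j := by
        intro c hc
        simp only [mem_filter, hD] at hc
        refine Finset.mem_filter.mpr ⟨hc.1.1, fun j hj => ?_⟩
        by_cases hjA : j ∈ A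
        · simp only [hf', dif_pos hjA]
          exact congrFun hc.2 ⟨j, hjA⟩
        · have hjU : j ∈ U := by
            rcases Finset.mem_union.mp hj with h | h
            · exact h
            · exact absurd h hjA
          simp only [hf', dif_neg hjA]
          exact hc.1.2 j hjU
      have hfibcard : (D.filter fun c => φ c = g).card
          ≤ (C.filter fun c => ∀ j ∈ U', c j = f' j).card := Finset.card_le_card hfib
      by_cases hcase : u - a ≤ d - 1
      · -- fibers have at most one element
        have hone : (C.filter fun c => ∀ j ∈ U', c j = f' j).card ≤ 1 :=
          small_fiber C hdist U' f' (hU'c ▸ hcase) hd1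
        have hDI : D.card ≤ I.card := by
          calc D.card ≤ I.card * (D.filter fun c => φ c = g).card := hcount
          _ ≤ I.card * 1 := Nat.mul_le_mul_left _ (hfibcard.trans hone)
          _ = I.card := Nat.mul_one _
        have harith := harith1
        have hWEa : W ^ (u - (d-1) + N) = W ^ a * W ^ (u - (d-1) + N - a) := by
          conv_lhs => rw [harith]
          exact pow_add _ _ _
        have hQEa : (q^N) ^ (u - (d-1) + N) = (q^N) ^ a * (q^N) ^ (u - (d-1) + N - a) := by
          conv_lhs => rw [harith]
          exact pow_add _ _ _
        calc D.card ^ N * W ^ (u - (d-1) + N)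
            ≤ I.card ^ N * W ^ (u - (d-1) + N) :=
              Nat.mul_le_mul_right _ (Nat.pow_le_pow_left hDI N)
        _ = (I.card ^ N * W ^ a) * W ^ (u - (d-1) + N - a) := by
              rw [hWEa]; ring
        _ ≤ (q ^ N) ^ a * (q ^ N) ^ (u - (d-1) + N - a) :=
              Nat.mul_le_mul key1 (Nat.pow_le_pow_left hWq _)
        _ = (q ^ N) ^ (u - (d-1) + N) := hQEa.symm
      · -- recursive case
        have hih := IH (u - a) (Nat.sub_lt hu0 ha1) U' f' hU'c
        set F := (C.filter fun c => ∀ j ∈ U', c j = f' j).card with hF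
        have harith := harith2 hcase
        have hWEa : W ^ (u - (d-1) + N) = W ^ a * W ^ ((u - a) - (d-1) + N) := by
          conv_lhs => rw [harith]
          exact pow_add _ _ _
        have hQEa : (q^N) ^ (u - (d-1) + N) = (q^N) ^ a * (q^N) ^ ((u - a) - (d-1) + N) := by
          conv_lhs => rw [harith]
          exact pow_add _ _ _
        calc D.card ^ N * W ^ (u - (d-1) + N)
            ≤ (I.card * F) ^ N * W ^ (u - (d-1) + N) := by
              apply Nat.mul_le_mul_right
              apply Nat.pow_le_pow_left
              exact hcount.trans (Nat.mul_le_mul_left _ hfibcard)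
        _ = (I.card ^ N * W ^ a) * (F ^ N * W ^ ((u - a) - (d-1) + N)) := by
              rw [hWEa, mul_pow]; ring
        _ ≤ (q ^ N) ^ a * (q ^ N) ^ ((u - a) - (d-1) + N) :=
              Nat.mul_le_mul key1 hih
        _ = (q ^ N) ^ (u - (d-1) + N) := hQEa.symm

theorem LRC_hamming_bound {Q : Type*} [Fintype Q] [DecidableEq Q]
    (q n k d r ρ N : ℕ) (hq : Fintype.card Q = q) (hq2 : 2 ≤ q)
    (hρ : 2 ≤ ρ) (hN : N = r + ρ - 1) (hd1 : 1 ≤ d)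
    (C : Finset (Fin n → Q)) (hk : C.card = q ^ k)
    (hdist : ∀ c ∈ C, ∀ c' ∈ C, c ≠ c' →
      d ≤ (univ.filter fun i => c i ≠ c' i).card)
    (R : Fin n → Finset (Fin n))
    (hmem : ∀ i, i ∈ R i) (hcard : ∀ i, (R i).card ≤ N)
    (hloc : ∀ i, ∀ c ∈ C, ∀ c' ∈ C, (∃ j ∈ R i, c j ≠ c' j) →
      ρ ≤ ((R i).filter fun j => c j ≠ c' j).card)
    (μ : ℕ) (hμ : μ = ⌈((n - (d - 1) : ℕ) : ℝ) / N⌉₊ + 1) :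
    (k : ℝ) ≤ μ * ((N : ℝ) -
      Real.logb q (∑ e ∈ range ((ρ - 1) / 2 + 1),
        (N.choose e : ℝ) * ((q : ℝ) - 1) ^ e)) := by
  classical
  set t := (ρ - 1) / 2 with htdef
  have ht : 2 * t + 1 ≤ ρ := by omega
  have hN1 : 1 ≤ N := by omega
  have hq1 : 1 ≤ q := by omega
  have hQne : Nonempty Q := Fintype.card_pos_iff.mp (by omega)
  obtain ⟨q0⟩ := hQne
  set W := Wvol (q - 1) t N with hWdef
  set M := n - (d - 1) + N with hM
  -- apply the counting lemma
  have hmain : (q ^ k) ^ N * W ^ M ≤ (q ^ N) ^ M := by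
    have h := main_count q n d ρ N t hq hq1 ht hd1 hN1 C hdist R hmem hcard hloc
      n (∅ : Finset (Fin n)) (fun _ => q0) (by simp)
    have hfil : (C.filter fun c => ∀ j ∈ (∅ : Finset (Fin n)), c j = q0) = C :=
      Finset.filter_true_of_mem (by simp)
    rwa [hfil, hk] at h
  -- identify W with the sum in the statement
  have hWr : ((W : ℕ) : ℝ) = ∑ e ∈ range (t + 1), (N.choose e : ℝ) * ((q : ℝ) - 1) ^ e := by
    rw [hWdef]
    unfold Wvol
    push_cast [Nat.cast_sub hq1]
    ring
  have hW1 : (1 : ℝ) ≤ (W : ℝ) := by exact_mod_cast Wvol_pos (q-1) t N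
  have hWq : (W : ℝ) ≤ (q : ℝ) ^ N := by
    have := Wvol_le (q-1) t N
    rw [Nat.sub_add_cancel hq1] at this
    exact_mod_cast this
  have hqR : (1 : ℝ) < (q : ℝ) := by exact_mod_cast hq2
  have hL : 0 < Real.log q := Real.log_pos hqR
  -- take logs
  have hmainR : ((q : ℝ) ^ k) ^ N * (W : ℝ) ^ M ≤ ((q : ℝ) ^ N) ^ M := by exact_mod_cast hmain
  have hpos : (0 : ℝ) < ((q : ℝ) ^ k) ^ N * (W : ℝ) ^ M := by positivity
  have hlog := Real.log_le_log hpos hmainR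
  rw [Real.log_mul (by positivity) (by positivity)] at hlog
  simp only [Real.log_pow] at hlog
  -- hlog : N * (k * log q) + M * log W ≤ M * (N * log q)
  have hkey : (k : ℝ) * N ≤ M * ((N : ℝ) - Real.logb q W) := by
    have h1 : (k : ℝ) * N * Real.log q ≤ M * ((N : ℝ) * Real.log q - Real.log W) := by
      nlinarith [hlog]
    have h2 : M * ((N : ℝ) - Real.logb q W) * Real.log q
        = M * ((N : ℝ) * Real.log q - Real.log W) := by
      rw [Real.logb]
      field_simp
    rw [← h2] at h1
    exact le_of_mul_le_mul_right h1 hL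
  have hNpos : (0 : ℝ) < (N : ℝ) := by exact_mod_cast hN1
  have hlogbW : Real.logb q (W : ℝ) ≤ N := by
    calc Real.logb q (W : ℝ) ≤ Real.logb q ((q : ℝ) ^ N) :=
          (Real.logb_le_logb hqR (by linarith) (by positivity)).mpr hWq
    _ = N := by rw [Real.logb_pow, Real.logb_self_eq_one hqR, mul_one]
  have hfac : (0 : ℝ) ≤ (N : ℝ) - Real.logb q W := by linarith
  have hMN : ((M : ℕ) : ℝ) / N ≤ (μ : ℝ) := by
    rw [hμ, hM]
    push_cast
    rw [add_div]
    have h1 : ((n - (d-1) : ℕ) : ℝ) / N ≤ ⌈((n - (d - 1) : ℕ) : ℝ) / N⌉₊ := Nat.le_ceil _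
    have h2 : ((N : ℕ) : ℝ) / N = 1 := div_self hNpos.ne'
    push_cast at h1 h2 ⊢
    linarith
  have hfinal : (k : ℝ) ≤ ((M : ℕ) : ℝ) / N * ((N : ℝ) - Real.logb q W) := by
    rw [div_mul_eq_mul_div, le_div_iff₀ hNpos]
    calc (k : ℝ) * N ≤ M * ((N : ℝ) - Real.logb q W) := hkey
    _ = M * ((N:ℝ) - Real.logb q W) := rfl
  calc (k : ℝ) ≤ ((M : ℕ) : ℝ) / N * ((N : ℝ) - Real.logb q W) := hfinal
  _ ≤ μ * ((N : ℝ) - Real.logb q W) := by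
      apply mul_le_mul_of_nonneg_right hMN hfac
  _ = μ * ((N : ℝ) - Real.logb q (∑ e ∈ range (t + 1), (N.choose e : ℝ) * ((q : ℝ) - 1) ^ e)) := by
      rw [← hWr]
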